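/- If a rotationally asymmetric configuration of distinct points on a circle has two confused leaders, then the two confused leaders are not antipodal to each other. -/

import Mathlib

open Real

/-- Normalize a real number into `[0, 2π)` (representing an angle on the circle). -/
noncomputable def norm2pi (x : ℝ) : ℝ := (2 * π) * Int.fract (x / (2 * π))

/-- Clockwise angular distance from `a` to `b`, in `[0, 2π)`. -/
noncomputable def cwAngle (a b : ℝ) : ℝ := norm2pi (b - a)

/-- A configuration: a finite set of angles, all lying in `[0, 2π)`. -/
def OnCircle (s : Finset ℝ) : Prop := ∀ x ∈ s, 0 ≤ x ∧ x < 2 * π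

/-- Rotation of a configuration by angle `θ`. -/
noncomputable def rotConf (s : Finset ℝ) (θ : ℝ) : Finset ℝ :=
  s.image (fun x => norm2pi (x + θ))

/-- Rotational asymmetry: no nontrivial rotation preserves the configuration. -/
def RotAsym (s : Finset ℝ) : Prop := ∀ θ ∈ Set.Ioo 0 (2 * π), rotConf s θ ≠ s

/-- The clockwise gap (angle) sequence of the point `r` in configuration `s`:
consecutive clockwise angular gaps starting at `r`. -/
noncomputable def angleSeq (s : Finset ℝ) (r : ℝ) : List ℝ :=
  let l := ((s.erase r).image (fun x => cwAngle r x)).sort (· ≤ ·)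
  List.zipWith (fun u v => u - v) (l ++ [2 * π]) (0 :: l)

/-- Strict lexicographic order on lists of reals. -/
def ListLexLt (l₁ l₂ : List ℝ) : Prop := List.Lex (· < ·) l₁ l₂

/-- `r` is the true leader of `s`: its angle sequence is lexicographically strictly
smaller than that of every other point. -/
def IsTrueLeader (s : Finset ℝ) (r : ℝ) : Prop :=
  r ∈ s ∧ ∀ x ∈ s, x ≠ r → ListLexLt (angleSeq s r) (angleSeq s x)

/-- The antipodal position of a point `r`. -/
noncomputable def antip (r : ℝ) : ℝ := norm2pi (r + π)

/-- The configuration as seen from `r` assuming its antipodal position is empty. -/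
noncomputable def confC0 (s : Finset ℝ) (r : ℝ) : Finset ℝ := s.erase (antip r)

/-- The configuration as seen from `r` assuming its antipodal position is occupied. -/
noncomputable def confC1 (s : Finset ℝ) (r : ℝ) : Finset ℝ := insert (antip r) s

/-- A confused leader: both possibilities `C₀(r)` and `C₁(r)` are rotationally
asymmetric, and `r` is the true leader in exactly one of them. -/
def ConfusedLeader (s : Finset ℝ) (r : ℝ) : Prop :=
  r ∈ s ∧ RotAsym (confC0 s r) ∧ RotAsym (confC1 s r) ∧
    Xor' (IsTrueLeader (confC0 s r) r) (IsTrueLeader (confC1 s r) r)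

/-- A sure leader: `r` is the true leader in every possible (rotationally
asymmetric) configuration among `C₀(r)`, `C₁(r)`. -/
def SureLeader (s : Finset ℝ) (r : ℝ) : Prop :=
  r ∈ s ∧ (RotAsym (confC0 s r) → IsTrueLeader (confC0 s r) r) ∧
    (RotAsym (confC1 s r) → IsTrueLeader (confC1 s r) r)

/-- An expected leader is a sure leader or a confused leader. -/
def ExpectedLeader (s : Finset ℝ) (r : ℝ) : Prop := SureLeader s r ∨ ConfusedLeader s r

/-- `r'` is the first clockwise neighbor of `r` in `s`. -/
def IsCwNeighbor (s : Finset ℝ) (r r' : ℝ) : Prop :=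
  r' ∈ s ∧ r' ≠ r ∧ ∀ x ∈ s, x ≠ r → cwAngle r r' ≤ cwAngle r x

/-! ### Auxiliary development -/

section Aux

open Finset

local notation "π2" => 2 * π

lemma two_pi_pos' : (0:ℝ) < 2 * π := by linarith [Real.pi_pos]

/-- congruence modulo `2π` -/
def Cong2pi (x y : ℝ) : Prop := ∃ k : ℤ, x - y = 2 * π * k

lemma norm2pi_sub_eq (x : ℝ) : norm2pi x = x - 2 * π * ⌊x / (2*π)⌋ := by
  have h2 : (2*π) ≠ 0 := ne_of_gt two_pi_pos'
  unfold norm2pi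
  rw [← Int.self_sub_floor, mul_sub, mul_div_cancel₀ _ h2]

lemma cong_norm2pi (x : ℝ) : Cong2pi (norm2pi x) x :=
  ⟨-⌊x / (2*π)⌋, by rw [norm2pi_sub_eq]; push_cast; ring⟩

lemma norm2pi_nonneg' (x : ℝ) : 0 ≤ norm2pi x :=
  mul_nonneg two_pi_pos'.le (Int.fract_nonneg _)

lemma norm2pi_lt' (x : ℝ) : norm2pi x < 2 * π := by
  have h := Int.fract_lt_one (x / (2*π))
  have h2 := two_pi_pos'
  unfold norm2pi
  nlinarith

lemma norm2pi_eq_self' {x : ℝ} (h0 : 0 ≤ x) (h1 : x < 2*π) : norm2pi x = x := by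
  have h2 : (0:ℝ) < 2*π := two_pi_pos'
  unfold norm2pi
  rw [Int.fract_eq_self.mpr ⟨div_nonneg h0 h2.le, (div_lt_one h2).mpr h1⟩,
    mul_div_cancel₀ _ (ne_of_gt h2)]

lemma norm2pi_congr {x y : ℝ} (h : Cong2pi x y) : norm2pi x = norm2pi y := by
  obtain ⟨k, hk⟩ := h
  have hx : x = y + 2*π*k := by linarith
  subst hx
  unfold norm2pi
  have h2 : (2*π) ≠ 0 := ne_of_gt two_pi_pos'
  have : (y + 2*π*k) / (2*π) = y/(2*π) + (k:ℝ) := by field_simp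
  rw [this, Int.fract_add_intCast]

lemma norm2pi_eq_of_cong {x v : ℝ} (h : Cong2pi x v) (h0 : 0 ≤ v) (h1 : v < 2*π) :
    norm2pi x = v := (norm2pi_congr h).trans (norm2pi_eq_self' h0 h1)

lemma eq_of_cong2pi {x y : ℝ} (h : Cong2pi x y) (h1 : -(2*π) < x - y) (h2 : x - y < 2*π) :
    x = y := by
  obtain ⟨k, hk⟩ := h
  have hπ := two_pi_pos'
  have hk1 : (k:ℝ) < 1 := by nlinarith
  have hk2 : (-1 : ℝ) < (k:ℝ) := by nlinarith
  have hk0 : k = 0 := by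
    have a : (-1 : ℤ) < k := by exact_mod_cast hk2
    have b : k < (1 : ℤ) := by exact_mod_cast hk1
    omega
  rw [hk0] at hk; push_cast at hk; linarith

lemma cwAngle_cong (a b : ℝ) : Cong2pi (cwAngle a b) (b - a) := cong_norm2pi _

lemma cwAngle_nonneg (a b : ℝ) : 0 ≤ cwAngle a b := norm2pi_nonneg' _
lemma cwAngle_lt (a b : ℝ) : cwAngle a b < 2*π := norm2pi_lt' _

lemma cwAngle_eq_zero_iff {a b : ℝ} (ha0 : 0 ≤ a) (ha1 : a < 2*π) (hb0 : 0 ≤ b) (hb1 : b < 2*π) :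
    cwAngle a b = 0 ↔ b = a := by
  constructor
  · intro h
    obtain ⟨k, hk⟩ := cwAngle_cong a b
    rw [h] at hk
    exact eq_of_cong2pi ⟨-k, by push_cast; linarith⟩ (by linarith) (by linarith)
  · rintro rfl
    rw [cwAngle, sub_self]
    exact norm2pi_eq_self' le_rfl two_pi_pos'

lemma cwAngle_pos {a b : ℝ} (ha0 : 0 ≤ a) (ha1 : a < 2*π) (hb0 : 0 ≤ b) (hb1 : b < 2*π)
    (hne : b ≠ a) : 0 < cwAngle a b :=
  lt_of_le_of_ne (cwAngle_nonneg a b)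
    (fun h => hne ((cwAngle_eq_zero_iff ha0 ha1 hb0 hb1).mp h.symm))

lemma norm2pi_add_cwAngle {a b : ℝ} (hb0 : 0 ≤ b) (hb1 : b < 2*π) :
    norm2pi (a + cwAngle a b) = b := by
  obtain ⟨k, hk⟩ := cwAngle_cong a b
  exact norm2pi_eq_of_cong ⟨k, by linarith⟩ hb0 hb1

lemma cwAngle_rev {a b : ℝ} (ha0 : 0 ≤ a) (ha1 : a < 2*π) (hb0 : 0 ≤ b) (hb1 : b < 2*π)
    (hne : b ≠ a) : cwAngle b a = 2*π - cwAngle a b := by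
  have h1 : 0 < cwAngle a b := cwAngle_pos ha0 ha1 hb0 hb1 hne
  have h2 : cwAngle a b < 2*π := cwAngle_lt a b
  obtain ⟨k, hk⟩ := cwAngle_cong a b
  exact norm2pi_eq_of_cong ⟨k - 1, by push_cast; linarith⟩ (by linarith) (by linarith)

/-- distances from `r` to the other points of `T` -/
noncomputable def dists (T : Finset ℝ) (r : ℝ) : Finset ℝ :=
  (T.erase r).image (fun x => cwAngle r x)

lemma mem_dists_iff {T : Finset ℝ} {r u : ℝ} (hT : OnCircle T) (hr0 : 0 ≤ r) (hr1 : r < 2*π)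
    (hu0 : 0 < u) (hu1 : u < 2*π) :
    u ∈ dists T r ↔ norm2pi (r + u) ∈ T := by
  unfold dists
  simp only [Finset.mem_image, Finset.mem_erase]
  constructor
  · rintro ⟨w, ⟨hwne, hwT⟩, rfl⟩
    rw [norm2pi_add_cwAngle (hT w hwT).1 (hT w hwT).2]
    exact hwT
  · intro h
    refine ⟨norm2pi (r + u), ⟨?_, h⟩, ?_⟩
    · intro heq
      obtain ⟨k, hk⟩ := cong_norm2pi (r + u)
      rw [heq] at hk
      have hu : u = 0 := eq_of_cong2pi ⟨-k, by push_cast; linarith⟩ (by linarith) (by linarith)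
      linarith
    · obtain ⟨k, hk⟩ := cong_norm2pi (r + u)
      exact norm2pi_eq_of_cong ⟨k, by linarith⟩ hu0.le hu1

lemma mem_dists_Ioo {T : Finset ℝ} {r u : ℝ} (hT : OnCircle T) (hr0 : 0 ≤ r) (hr1 : r < 2*π)
    (hu : u ∈ dists T r) : 0 < u ∧ u < 2*π := by
  unfold dists at hu
  simp only [Finset.mem_image, Finset.mem_erase] at hu
  obtain ⟨w, ⟨hwne, hwT⟩, rfl⟩ := hu
  exact ⟨cwAngle_pos hr0 hr1 (hT w hwT).1 (hT w hwT).2 hwne, cwAngle_lt r w⟩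

/-- `v` witnesses that `A` is smaller than `B`. -/
def Wit (A B : Finset ℝ) (v : ℝ) : Prop :=
  v ∈ A ∧ v ∉ B ∧ ∀ u, u < v → (u ∈ A ↔ u ∈ B)

def Fless (A B : Finset ℝ) : Prop := ∃ v, Wit A B v

lemma fless_trans {A B C : Finset ℝ} (h1 : Fless A B) (h2 : Fless B C) : Fless A C := by
  obtain ⟨v, hvA, hvB, hagv⟩ := h1
  obtain ⟨w, hwB, hwC, hagw⟩ := h2
  rcases lt_trichotomy v w with h | h | h
  · exact ⟨v, hvA, fun hvC => hvB ((hagw v h).mpr hvC),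
      fun u hu => (hagv u hu).trans (hagw u (hu.trans h))⟩
  · exact absurd (h ▸ hwB) hvB
  · exact ⟨w, (hagv w h).mpr hwB, hwC, fun u hu => (hagv u (hu.trans h)).trans (hagw u hu)⟩

lemma fless_total {A B : Finset ℝ} (h : A ≠ B) : Fless A B ∨ Fless B A := by
  classical
  have hne : ((A \ B) ∪ (B \ A)).Nonempty := by
    rw [Finset.nonempty_iff_ne_empty]
    intro hemp
    apply h
    ext u
    constructor <;> intro hu <;> by_contra hnu
    · have : u ∈ (A \ B) ∪ (B \ A) := by
        rw [Finset.mem_union, Finset.mem_sdiff, Finset.mem_sdiff]; exact Or.inl ⟨hu, hnu⟩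
      rw [hemp] at this; exact absurd this (Finset.notMem_empty u)
    · have : u ∈ (A \ B) ∪ (B \ A) := by
        rw [Finset.mem_union, Finset.mem_sdiff, Finset.mem_sdiff]; exact Or.inr ⟨hu, hnu⟩
      rw [hemp] at this; exact absurd this (Finset.notMem_empty u)
  set m := Finset.min' _ hne with hm
  have hmm := Finset.min'_mem _ hne
  have hag : ∀ u, u < m → (u ∈ A ↔ u ∈ B) := by
    intro u hu
    constructor <;> intro h1 <;> by_contra h2
    · have : u ∈ (A \ B) ∪ (B \ A) := by
        rw [Finset.mem_union, Finset.mem_sdiff, Finset.mem_sdiff]; exact Or.inl ⟨h1, h2⟩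
      exact absurd hu (not_lt.mpr (Finset.min'_le _ u this))
    · have : u ∈ (A \ B) ∪ (B \ A) := by
        rw [Finset.mem_union, Finset.mem_sdiff, Finset.mem_sdiff]; exact Or.inr ⟨h1, h2⟩
      exact absurd hu (not_lt.mpr (Finset.min'_le _ u this))
  rw [Finset.mem_union, Finset.mem_sdiff, Finset.mem_sdiff] at hmm
  rcases hmm with ⟨h1, h2⟩ | ⟨h1, h2⟩
  · exact Or.inl ⟨m, h1, h2, hag⟩
  · exact Or.inr ⟨m, h1, h2, fun u hu => (hag u hu).symm⟩

lemma exists_rel_min {α : Type*} (R : α → α → Prop)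
    (htr : ∀ {a b c}, R a b → R b c → R a c) :
    ∀ (s : Finset α), (∀ a ∈ s, ∀ b ∈ s, a ≠ b → R a b ∨ R b a) → s.Nonempty →
      ∃ L ∈ s, ∀ x ∈ s, x ≠ L → R L x := by
  classical
  intro s
  induction s using Finset.induction_on with
  | empty => intro _ h; exact absurd h (by simp)
  | @insert a s ha IH =>
    intro htot _
    rcases s.eq_empty_or_nonempty with rfl | hsne
    · refine ⟨a, by simp, ?_⟩
      intro x hx hxa
      simp only [Finset.mem_insert, Finset.notMem_empty, or_false] at hx
      exact absurd hx hxa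
    · obtain ⟨L, hLs, hLmin⟩ :=
        IH (fun x hx y hy => htot x (Finset.mem_insert_of_mem hx) y (Finset.mem_insert_of_mem hy)) hsne
      have haL : a ≠ L := fun h => ha (h ▸ hLs)
      rcases htot a (Finset.mem_insert_self a s) L (Finset.mem_insert_of_mem hLs) haL with h | h
      · refine ⟨a, Finset.mem_insert_self a s, ?_⟩
        intro x hx hxa
        rcases Finset.mem_insert.mp hx with rfl | hxs
        · exact absurd rfl hxa
        · rcases eq_or_ne x L with rfl | hxL
          · exact h
          · exact htr h (hLmin x hxs hxL)
      · refine ⟨L, Finset.mem_insert_of_mem hLs, ?_⟩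
        intro x hx hxL
        rcases Finset.mem_insert.mp hx with rfl | hxs
        · exact h
        · exact hLmin x hxs hxL

def LeadsF (T : Finset ℝ) (r : ℝ) : Prop :=
  ∀ x ∈ T, x ≠ r → Fless (dists T r) (dists T x)

lemma dists_inj {T : Finset ℝ} (hT : OnCircle T) (hasym : RotAsym T) {x y : ℝ}
    (hx : x ∈ T) (hy : y ∈ T) (hne : x ≠ y) : dists T x ≠ dists T y := by
  intro hD
  have hxI := hT x hx
  have hyI := hT y hy
  set θ := cwAngle x y with hθ
  have hθ0 : 0 < θ := cwAngle_pos hxI.1 hxI.2 hyI.1 hyI.2 (Ne.symm hne)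
  apply hasym θ ⟨hθ0, cwAngle_lt x y⟩
  have hinj : Set.InjOn (fun z => norm2pi (z + θ)) ↑T := by
    intro a haT b hbT hab
    have haI := hT a (Finset.mem_coe.mp haT)
    have hbI := hT b (Finset.mem_coe.mp hbT)
    obtain ⟨k1, h1⟩ := cong_norm2pi (a + θ)
    obtain ⟨k2, h2⟩ := cong_norm2pi (b + θ)
    simp only at hab
    exact eq_of_cong2pi ⟨k2 - k1, by push_cast; linarith⟩ (by linarith) (by linarith)
  apply Finset.eq_of_subset_of_card_le
  · intro w hw
    simp only [rotConf, Finset.mem_image] at hw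
    obtain ⟨z, hzT, rfl⟩ := hw
    have hzI := hT z hzT
    rcases eq_or_ne z x with rfl | hzx
    · rw [norm2pi_add_cwAngle hyI.1 hyI.2]
      exact hy
    · set u := cwAngle x z with hu
      have hu0 : 0 < u := cwAngle_pos hxI.1 hxI.2 hzI.1 hzI.2 hzx
      have hu2 : u < 2*π := cwAngle_lt x z
      have humem : u ∈ dists T x := by
        rw [mem_dists_iff hT hxI.1 hxI.2 hu0 hu2, norm2pi_add_cwAngle hzI.1 hzI.2]
        exact hzT
      rw [hD] at humem
      have hmem2 : norm2pi (y + u) ∈ T := (mem_dists_iff hT hyI.1 hyI.2 hu0 hu2).mp humem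
      obtain ⟨k1, h1⟩ := cwAngle_cong x y
      obtain ⟨k2, h2⟩ := cwAngle_cong x z
      have : norm2pi (z + θ) = norm2pi (y + u) := norm2pi_congr ⟨k1 - k2, by push_cast; linarith⟩
      rw [this]
      exact hmem2
  · rw [rotConf, Finset.card_image_of_injOn hinj]

lemma exists_leader {T : Finset ℝ} (hT : OnCircle T) (hasym : RotAsym T) (hne : T.Nonempty) :
    ∃ L ∈ T, LeadsF T L := by
  obtain ⟨L, hLT, hmin⟩ := exists_rel_min (fun a b => Fless (dists T a) (dists T b))
    (fun h1 h2 => fless_trans h1 h2) T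
    (fun a ha b hb hab => fless_total (dists_inj hT hasym ha hb hab)) hne
  exact ⟨L, hLT, fun x hx hxL => hmin x hx hxL⟩

/-! ### Bridge from `angleSeq` lex order to `Fless` -/

lemma lexlt_cons_iff {r : ℝ → ℝ → Prop} {x y : ℝ} {u v : List ℝ} :
    List.Lex r (x::u) (y::v) ↔ r x y ∨ (x = y ∧ List.Lex r u v) := by
  constructor
  · intro h
    cases h with
    | rel h => exact Or.inl h
    | cons h => exact Or.inr ⟨rfl, h⟩
  · rintro (h | ⟨rfl, h⟩)
    · exact List.Lex.rel h
    · exact List.Lex.cons h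

lemma gaps_lex (c : ℝ) : ∀ (l l' : List ℝ) (a : ℝ), l.length = l'.length →
    (List.Lex (· < ·) (List.zipWith (fun u v => u - v) (l ++ [c]) (a :: l))
      (List.zipWith (fun u v => u - v) (l' ++ [c]) (a :: l')) ↔ List.Lex (· < ·) l l') := by
  intro l
  induction l with
  | nil =>
    intro l' a hlen
    have hl' : l' = [] := List.length_eq_zero_iff.mp hlen.symm
    subst hl'
    simp only [List.nil_append, List.zipWith]
    constructor
    · intro h
      exfalso
      rcases lexlt_cons_iff.mp h with h1 | ⟨_, h2⟩
      · exact lt_irrefl _ h1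
      · cases h2
    · intro h; cases h
  | cons b l ih =>
    intro l' a hlen
    cases l' with
    | nil => simp at hlen
    | cons b' l2 =>
      have hlen' : l.length = l2.length := by simpa using hlen
      simp only [List.cons_append, List.zipWith_cons_cons]
      rw [lexlt_cons_iff, lexlt_cons_iff]
      constructor
      · rintro (h | ⟨heq, htail⟩)
        · exact Or.inl (by linarith)
        · have hb : b = b' := by linarith
          subst hb
          exact Or.inr ⟨rfl, (ih l2 b hlen').mp htail⟩
      · rintro (h | ⟨rfl, htail⟩)
        · exact Or.inl (by linarith)
        · exact Or.inr ⟨rfl, (ih l2 b hlen').mpr htail⟩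

lemma sorted_lex_iff : ∀ (l l' : List ℝ), l.Pairwise (· < ·) → l'.Pairwise (· < ·) →
    l.length = l'.length →
    (List.Lex (· < ·) l l' ↔ ∃ v, v ∈ l ∧ v ∉ l' ∧ ∀ u, u < v → (u ∈ l ↔ u ∈ l')) := by
  intro l
  induction l with
  | nil =>
    intro l' _ _ hlen
    have hl' : l' = [] := List.length_eq_zero_iff.mp hlen.symm
    subst hl'
    constructor
    · intro h; cases h
    · rintro ⟨v, hv, -⟩; cases hv
  | cons a l ih =>
    intro l' hs hs' hlen
    cases l' with
    | nil => simp at hlen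
    | cons b l2 =>
      rw [List.pairwise_cons] at hs hs'
      obtain ⟨hal, hsl⟩ := hs
      obtain ⟨hbl, hsl'⟩ := hs'
      have hlen' : l.length = l2.length := by simpa using hlen
      rcases lt_trichotomy a b with hab | hab | hab
      · constructor
        · intro _
          refine ⟨a, List.mem_cons_self (a := a) (l := l), ?_, ?_⟩
          · intro hmem
            rcases List.mem_cons.mp hmem with h | h
            · exact absurd h (ne_of_lt hab)
            · exact absurd (hbl a h) (by linarith)
          · intro u hu
            constructor <;> intro hmem <;> exfalso
            · rcases List.mem_cons.mp hmem with rfl | h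
              · exact lt_irrefl u hu
              · exact absurd (hal u h) (by linarith)
            · rcases List.mem_cons.mp hmem with rfl | h
              · linarith
              · have := hbl u h; linarith
        · intro _; exact List.Lex.rel hab
      · subst hab
        rw [lexlt_cons_iff]
        constructor
        · rintro (h | ⟨-, htail⟩)
          · exact absurd h (lt_irrefl a)
          · obtain ⟨v, hv, hv', hag⟩ := (ih l2 hsl hsl' hlen').mp htail
            refine ⟨v, List.mem_cons_of_mem a hv, ?_, ?_⟩
            · intro hmem
              rcases List.mem_cons.mp hmem with rfl | h
              · exact absurd (hal v hv) (lt_irrefl v)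
              · exact hv' h
            · intro u hu
              simp only [List.mem_cons]
              constructor
              · rintro (rfl | h)
                · exact Or.inl rfl
                · exact Or.inr ((hag u hu).mp h)
              · rintro (rfl | h)
                · exact Or.inl rfl
                · exact Or.inr ((hag u hu).mpr h)
        · rintro ⟨v, hv, hv', hag⟩
          right
          have hva : v ≠ a := fun h => hv' (h ▸ List.mem_cons_self (a := a) (l := l2))
          have hvl : v ∈ l := (List.mem_cons.mp hv).resolve_left hva
          refine ⟨rfl, (ih l2 hsl hsl' hlen').mpr ⟨v, hvl, fun h => hv' (List.mem_cons_of_mem a h), ?_⟩⟩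
          intro u hu
          have hiff := hag u hu
          constructor
          · intro h
            rcases List.mem_cons.mp (hiff.mp (List.mem_cons_of_mem a h)) with rfl | h2
            · exact absurd (hal u h) (lt_irrefl u)
            · exact h2
          · intro h
            rcases List.mem_cons.mp (hiff.mpr (List.mem_cons_of_mem a h)) with rfl | h2
            · exact absurd (hbl u h) (lt_irrefl u)
            · exact h2
      · constructor
        · intro h
          exfalso
          rcases lexlt_cons_iff.mp h with h1 | ⟨heq, -⟩
          · linarith
          · rw [heq] at hab; exact lt_irrefl b hab
        · rintro ⟨v, hv, hv', hag⟩
          exfalso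
          have hbv : b < v := by
            rcases List.mem_cons.mp hv with rfl | h
            · exact hab
            · exact hab.trans (hal v h)
          have hbmem : b ∈ a :: l := (hag b hbv).mpr (List.mem_cons_self (a := b) (l := l2))
          rcases List.mem_cons.mp hbmem with heq | h
          · rw [heq] at hab; exact lt_irrefl a hab
          · exact absurd (hal b h) (by linarith)

lemma angleSeq_eq (T : Finset ℝ) (r : ℝ) :
    angleSeq T r = List.zipWith (fun u v => u - v)
      (((dists T r).sort (· ≤ ·)) ++ [2 * π]) (0 :: (dists T r).sort (· ≤ ·)) := rfl

lemma card_dists {T : Finset ℝ} {r : ℝ} (hT : OnCircle T) (hr0 : 0 ≤ r) (hr1 : r < 2*π)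
    (hr : r ∈ T) : (dists T r).card = T.card - 1 := by
  unfold dists
  rw [Finset.card_image_of_injOn, Finset.card_erase_of_mem hr]
  intro a ha b hb hab
  have haT := Finset.mem_of_mem_erase (Finset.mem_coe.mp ha)
  have hbT := Finset.mem_of_mem_erase (Finset.mem_coe.mp hb)
  have haI := hT a haT
  have hbI := hT b hbT
  obtain ⟨k1, h1⟩ := cwAngle_cong r a
  obtain ⟨k2, h2⟩ := cwAngle_cong r b
  exact eq_of_cong2pi ⟨k2 - k1, by push_cast; linarith⟩ (by linarith) (by linarith)

lemma fless_iff_lex {T : Finset ℝ} {r x : ℝ} (hT : OnCircle T) (hr : r ∈ T) (hx : x ∈ T) :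
    ListLexLt (angleSeq T r) (angleSeq T x) ↔ Fless (dists T r) (dists T x) := by
  have hrI := hT r hr
  have hxI := hT x hx
  have hlen : ((dists T r).sort (· ≤ ·)).length = ((dists T x).sort (· ≤ ·)).length := by
    rw [Finset.length_sort, Finset.length_sort, card_dists hT hrI.1 hrI.2 hr,
      card_dists hT hxI.1 hxI.2 hx]
  rw [ListLexLt, angleSeq_eq, angleSeq_eq,
    gaps_lex (2*π) _ _ 0 hlen,
    sorted_lex_iff _ _ (Finset.sortedLT_sort _).pairwise (Finset.sortedLT_sort _).pairwise hlen]
  unfold Fless Wit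
  simp only [Finset.mem_sort]

lemma isTrueLeader_iff {T : Finset ℝ} {r : ℝ} (hT : OnCircle T) (hr : r ∈ T) :
    IsTrueLeader T r ↔ LeadsF T r := by
  unfold IsTrueLeader LeadsF
  rw [and_iff_right hr]
  constructor
  · intro h x hx hxr
    exact (fless_iff_lex hT hr hx).mp (h x hx hxr)
  · intro h x hx hxr
    exact (fless_iff_lex hT hr hx).mpr (h x hx hxr)

/-! ### Erasing a point, antipodal computations -/

lemma mem_dists_erase {T : Finset ℝ} {r' y u : ℝ} (hT : OnCircle T) (hr' : r' ∈ T)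
    (hy0 : 0 ≤ y) (hy1 : y < 2*π) :
    u ∈ dists (T.erase r') y ↔ (u ∈ dists T y ∧ u ≠ cwAngle y r') := by
  have hTe : OnCircle (T.erase r') := fun z hz => hT z (Finset.mem_of_mem_erase hz)
  by_cases hu : 0 < u ∧ u < 2*π
  · rw [mem_dists_iff hTe hy0 hy1 hu.1 hu.2, mem_dists_iff hT hy0 hy1 hu.1 hu.2,
      Finset.mem_erase]
    have hr'I := hT r' hr'
    constructor
    · rintro ⟨hnr, hmem⟩
      refine ⟨hmem, fun hequ => hnr ?_⟩
      rw [hequ]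
      exact norm2pi_add_cwAngle hr'I.1 hr'I.2
    · rintro ⟨hmem, hnequ⟩
      refine ⟨fun heq => hnequ ?_, hmem⟩
      obtain ⟨k, hk⟩ := cong_norm2pi (y + u)
      rw [heq] at hk
      exact (norm2pi_eq_of_cong ⟨k, by linarith⟩ hu.1.le hu.2).symm
  · have h1 : u ∉ dists (T.erase r') y := fun h => hu (mem_dists_Ioo hTe hy0 hy1 h)
    have h2 : u ∉ dists T y := fun h => hu (mem_dists_Ioo hT hy0 hy1 h)
    simp [h1, h2]

lemma antip_Ico (r : ℝ) : 0 ≤ antip r ∧ antip r < 2*π :=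
  ⟨norm2pi_nonneg' _, norm2pi_lt' _⟩

lemma cwAngle_antip {r : ℝ} (hr0 : 0 ≤ r) (hr1 : r < 2*π) : cwAngle r (antip r) = π := by
  have hπ := Real.pi_pos
  obtain ⟨k, hk⟩ := cong_norm2pi (r + π)
  have hun : norm2pi (r + π) = antip r := rfl
  rw [hun] at hk
  exact norm2pi_eq_of_cong ⟨k, by linarith⟩ hπ.le (by linarith)

lemma ne_antip_self {r : ℝ} (hr0 : 0 ≤ r) (hr1 : r < 2*π) : r ≠ antip r := by
  intro h
  have h1 := cwAngle_antip hr0 hr1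
  rw [← h] at h1
  rw [(cwAngle_eq_zero_iff hr0 hr1 hr0 hr1).mpr rfl] at h1
  exact absurd h1.symm (ne_of_gt Real.pi_pos)

lemma cwAngle_x_antip_lt {r x : ℝ} (hr0 : 0 ≤ r) (hr1 : r < 2*π) (hx0 : 0 ≤ x) (hx1 : x < 2*π)
    (ht0 : 0 < cwAngle r x) (ht : cwAngle r x < π) :
    cwAngle x (antip r) = π - cwAngle r x := by
  have hπ := Real.pi_pos
  obtain ⟨k1, h1⟩ := cong_norm2pi (r + π)
  have hun : norm2pi (r + π) = antip r := rfl
  rw [hun] at h1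
  obtain ⟨k2, h2⟩ := cwAngle_cong r x
  exact norm2pi_eq_of_cong ⟨k1 + k2, by push_cast; linarith⟩ (by linarith) (by linarith)

lemma cwAngle_x_antip_gt {r x : ℝ} (hr0 : 0 ≤ r) (hr1 : r < 2*π) (hx0 : 0 ≤ x) (hx1 : x < 2*π)
    (ht : π < cwAngle r x) :
    cwAngle x (antip r) = 3*π - cwAngle r x := by
  have hπ := Real.pi_pos
  have ht2 : cwAngle r x < 2*π := cwAngle_lt r x
  obtain ⟨k1, h1⟩ := cong_norm2pi (r + π)
  have hun : norm2pi (r + π) = antip r := rfl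
  rw [hun] at h1
  obtain ⟨k2, h2⟩ := cwAngle_cong r x
  exact norm2pi_eq_of_cong ⟨k1 + k2 - 1, by push_cast; linarith⟩ (by linarith) (by linarith)

/-! ### The core lemma -/

lemma core {T : Finset ℝ} {r x δ : ℝ} (hT : OnCircle T) (hr : r ∈ T) (hx : x ∈ T)
    (hlead : LeadsF T r) (ht : π < cwAngle r x)
    (hδ : Wit (dists T r) (dists T x) δ) : δ < π := by
  by_contra hcon
  push_neg at hcon
  obtain ⟨hδr, hδx, hag⟩ := hδ
  have hπ := Real.pi_pos
  have hrI := hT r hr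
  have hxI := hT x hx
  have hxr : x ≠ r := by
    rintro rfl
    rw [(cwAngle_eq_zero_iff hrI.1 hrI.2 hrI.1 hrI.2).mpr rfl] at ht
    linarith
  set t := cwAngle r x with htdef
  have ht2 : t < 2*π := cwAngle_lt r x
  set e := cwAngle x r with hedef
  have hee : e = 2*π - t := cwAngle_rev hrI.1 hrI.2 hxI.1 hxI.2 hxr
  have he0 : 0 < e := by rw [hee]; linarith
  have heπ : e < π := by rw [hee]; linarith
  have hδI := mem_dists_Ioo hT hrI.1 hrI.2 hδr
  obtain ⟨kx, hkx⟩ := cwAngle_cong r x   -- t - (x - r) = 2π kx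
  have heX : e ∈ dists T x := by
    rw [mem_dists_iff hT hxI.1 hxI.2 he0 (by linarith)]
    obtain ⟨k1, h1⟩ := cwAngle_cong x r
    have : norm2pi (x + e) = r := norm2pi_eq_of_cong ⟨k1, by linarith⟩ hrI.1 hrI.2
    rw [this]; exact hr
  have heR : e ∈ dists T r := (hag e (by linarith)).mpr heX
  set z := norm2pi (r + e) with hzdef
  have hzT : z ∈ T := (mem_dists_iff hT hrI.1 hrI.2 he0 (by linarith)).mp heR
  have hzI : 0 ≤ z ∧ z < 2*π := ⟨norm2pi_nonneg' _, norm2pi_lt' _⟩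
  obtain ⟨kz, hkz⟩ := cong_norm2pi (r + e)  -- z - (r + e) = 2π kz
  rw [← hzdef] at hkz
  have hzr : z ≠ r := by
    intro h
    rw [h] at hkz
    have : e = 0 := eq_of_cong2pi ⟨-kz, by push_cast; linarith⟩ (by linarith) (by linarith)
    linarith
  obtain ⟨γ, hγr, hγz, hagz⟩ := hlead z hzT hzr
  have hγI := mem_dists_Ioo hT hrI.1 hrI.2 hγr
  rcases lt_trichotomy (γ + e) δ with hlt | heq2 | hgt
  · have hge0 : (0:ℝ) < γ + e := by linarith
    have hmem : (γ + e) ∈ dists T x := by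
      rw [mem_dists_iff hT hxI.1 hxI.2 hge0 (by linarith)]
      have heq : norm2pi (x + (γ + e)) = norm2pi (r + γ) :=
        norm2pi_congr ⟨-kx + 1, by push_cast; linarith⟩
      rw [heq]
      exact (mem_dists_iff hT hrI.1 hrI.2 hγI.1 hγI.2).mp hγr
    have hmemr : (γ + e) ∈ dists T r := (hag _ hlt).mpr hmem
    apply hγz
    rw [mem_dists_iff hT hzI.1 hzI.2 hγI.1 hγI.2]
    have heq : norm2pi (z + γ) = norm2pi (r + (γ + e)) :=
      norm2pi_congr ⟨kz, by push_cast; linarith⟩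
    rw [heq]
    exact (mem_dists_iff hT hrI.1 hrI.2 hge0 (by linarith)).mp hmemr
  · apply hγz
    rw [mem_dists_iff hT hzI.1 hzI.2 hγI.1 hγI.2]
    have heq : norm2pi (z + γ) = norm2pi (r + δ) :=
      norm2pi_congr ⟨kz, by push_cast; linarith⟩
    rw [heq]
    exact (mem_dists_iff hT hrI.1 hrI.2 hδI.1 hδI.2).mp hδr
  · have hu0 : 0 < δ - e := by linarith
    have huz : (δ - e) ∈ dists T z := by
      rw [mem_dists_iff hT hzI.1 hzI.2 hu0 (by linarith)]
      have heq : norm2pi (z + (δ - e)) = norm2pi (r + δ) :=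
        norm2pi_congr ⟨kz, by push_cast; linarith⟩
      rw [heq]
      exact (mem_dists_iff hT hrI.1 hrI.2 hδI.1 hδI.2).mp hδr
    have hur : (δ - e) ∈ dists T r := (hagz _ (by linarith)).mpr huz
    apply hδx
    rw [mem_dists_iff hT hxI.1 hxI.2 hδI.1 hδI.2]
    have heq : norm2pi (x + δ) = norm2pi (r + (δ - e)) :=
      norm2pi_congr ⟨-kx + 1, by push_cast; linarith⟩
    rw [heq]
    exact (mem_dists_iff hT hrI.1 hrI.2 hu0 (by linarith)).mp hur

/-! ### The leader stays leader after removing its antipode -/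

lemma stay_leader {T : Finset ℝ} {r : ℝ} (hT : OnCircle T) (hr : r ∈ T) (hr2 : antip r ∈ T)
    (hlead : LeadsF T r) : LeadsF (T.erase (antip r)) r := by
  intro x hx hxr
  have hx' : x ∈ T := Finset.mem_of_mem_erase hx
  have hxa : x ≠ antip r := (Finset.mem_erase.mp hx).1
  have hrI := hT r hr
  have hxI := hT x hx'
  have haI := antip_Ico r
  have hπ := Real.pi_pos
  set t := cwAngle r x with htdef
  have ht0 : 0 < t := cwAngle_pos hrI.1 hrI.2 hxI.1 hxI.2 hxr
  have ht2 : t < 2*π := cwAngle_lt r x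
  have htπ : t ≠ π := by
    intro h
    apply hxa
    have hxx : norm2pi (r + t) = x := norm2pi_add_cwAngle hxI.1 hxI.2
    rw [h] at hxx
    rw [← hxx]
    rfl
  obtain ⟨δ, hδr, hδx, hag⟩ := hlead x hx' hxr
  have hδI := mem_dists_Ioo hT hrI.1 hrI.2 hδr
  have hcwa : cwAngle r (antip r) = π := cwAngle_antip hrI.1 hrI.2
  rcases lt_or_gt_of_ne htπ with htlt | htgt
  · -- t < π
    have hd : cwAngle x (antip r) = π - t := cwAngle_x_antip_lt hrI.1 hrI.2 hxI.1 hxI.2 ht0 htlt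
    have hdX : (π - t) ∈ dists T x := by
      rw [mem_dists_iff hT hxI.1 hxI.2 (by linarith) (by linarith)]
      have heq : norm2pi (x + (π - t)) = antip r := by
        rw [← hd]
        exact norm2pi_add_cwAngle haI.1 haI.2
      rw [heq]; exact hr2
    rcases lt_trichotomy δ (π - t) with h1 | h1 | h1
    · refine ⟨δ, ?_, ?_, ?_⟩
      · rw [mem_dists_erase hT hr2 hrI.1 hrI.2, hcwa]
        exact ⟨hδr, by linarith⟩
      · rw [mem_dists_erase hT hr2 hxI.1 hxI.2]
        rintro ⟨h, -⟩
        exact hδx h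
      · intro u hu
        rw [mem_dists_erase hT hr2 hrI.1 hrI.2, mem_dists_erase hT hr2 hxI.1 hxI.2, hcwa, hd]
        constructor
        · rintro ⟨h, -⟩; exact ⟨(hag u hu).mp h, by linarith⟩
        · rintro ⟨h, -⟩; exact ⟨(hag u hu).mpr h, by linarith⟩
    · exfalso; apply hδx; rw [h1]; exact hdX
    · have hdr : (π - t) ∈ dists T r := (hag _ h1).mpr hdX
      refine ⟨π - t, ?_, ?_, ?_⟩
      · rw [mem_dists_erase hT hr2 hrI.1 hrI.2, hcwa]
        exact ⟨hdr, by linarith⟩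
      · rw [mem_dists_erase hT hr2 hxI.1 hxI.2]
        rintro ⟨-, hne2⟩
        exact hne2 hd.symm
      · intro u hu
        rw [mem_dists_erase hT hr2 hrI.1 hrI.2, mem_dists_erase hT hr2 hxI.1 hxI.2, hcwa, hd]
        constructor
        · rintro ⟨h, -⟩; exact ⟨(hag u (by linarith)).mp h, by linarith⟩
        · rintro ⟨h, -⟩; exact ⟨(hag u (by linarith)).mpr h, by linarith⟩
  · -- t > π
    have hd : cwAngle x (antip r) = 3*π - t := cwAngle_x_antip_gt hrI.1 hrI.2 hxI.1 hxI.2 htgt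
    have hδπ : δ < π := core hT hr hx' hlead htgt ⟨hδr, hδx, hag⟩
    refine ⟨δ, ?_, ?_, ?_⟩
    · rw [mem_dists_erase hT hr2 hrI.1 hrI.2, hcwa]
      exact ⟨hδr, by linarith⟩
    · rw [mem_dists_erase hT hr2 hxI.1 hxI.2]
      rintro ⟨h, -⟩
      exact hδx h
    · intro u hu
      rw [mem_dists_erase hT hr2 hrI.1 hrI.2, mem_dists_erase hT hr2 hxI.1 hxI.2, hcwa, hd]
      constructor
      · rintro ⟨h, -⟩; exact ⟨(hag u hu).mp h, by linarith⟩
      · rintro ⟨h, -⟩; exact ⟨(hag u hu).mpr h, by linarith⟩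

/-! ### The kill lemma -/

lemma kill {T : Finset ℝ} {r L : ℝ} (hT : OnCircle T) (hr : r ∈ T) (hr2 : antip r ∈ T)
    (hL : L ∈ T) (hLr : L ≠ r) (hLa : L ≠ antip r)
    (hA : LeadsF (T.erase (antip r)) r)
    (hLlead : Fless (dists T L) (dists T r))
    (ht : π < cwAngle r L) : False := by
  have hπ := Real.pi_pos
  have hrI := hT r hr
  have hLI := hT L hL
  have hTe : OnCircle (T.erase (antip r)) := fun z hz => hT z (Finset.mem_of_mem_erase hz)
  have hrm : r ∈ T.erase (antip r) :=
    Finset.mem_erase.mpr ⟨ne_antip_self hrI.1 hrI.2, hr⟩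
  have hLm : L ∈ T.erase (antip r) := Finset.mem_erase.mpr ⟨hLa, hL⟩
  obtain ⟨δs, hws⟩ := hA L hLm hLr
  have hδsπ : δs < π := core hTe hrm hLm hA ht hws
  obtain ⟨hδsr, hδsL, hags⟩ := hws
  obtain ⟨δ₁, hδ₁L, hδ₁r, hag₁⟩ := hLlead
  have ht2 : cwAngle r L < 2*π := cwAngle_lt r L
  have hd : cwAngle L (antip r) = 3*π - cwAngle r L :=
    cwAngle_x_antip_gt hrI.1 hrI.2 hLI.1 hLI.2 ht
  have hδsr' : δs ∈ dists T r := ((mem_dists_erase hT hr2 hrI.1 hrI.2).mp hδsr).1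
  have hδsL' : δs ∉ dists T L := by
    intro h
    apply hδsL
    rw [mem_dists_erase hT hr2 hLI.1 hLI.2, hd]
    exact ⟨h, by linarith⟩
  rcases lt_trichotomy δ₁ δs with h | h | h
  · have hiff := hags δ₁ h
    rw [mem_dists_erase hT hr2 hrI.1 hrI.2,
      mem_dists_erase hT hr2 hLI.1 hLI.2, hd] at hiff
    exact hδ₁r (hiff.mpr ⟨hδ₁L, by linarith⟩).1
  · rw [h] at hδ₁L
    exact hδsL' hδ₁L
  · exact hδsL' ((hag₁ δs h).mpr hδsr')

end Aux

/-- two distinct confused leaders are not antipodal to each other. -/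
theorem confused_leaders_not_antipodal
    (s : Finset ℝ) (hcirc : OnCircle s) (hasym : RotAsym s)
    (r₁ r₂ : ℝ) (h₁ : ConfusedLeader s r₁) (h₂ : ConfusedLeader s r₂)
    (hne : r₁ ≠ r₂) :
    antip r₁ ≠ r₂ := by
  intro hanti
  obtain ⟨hr₁s, hA₁asym, hB₁asym, hxor₁⟩ := h₁
  obtain ⟨hr₂s, hA₂asym, hB₂asym, hxor₂⟩ := h₂
  have hπ := Real.pi_pos
  have hr₁I := hcirc r₁ hr₁s
  have hr₂I := hcirc r₂ hr₂s
  have hanti2 : antip r₂ = r₁ := by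
    rw [← hanti]
    show norm2pi (antip r₁ + π) = r₁
    obtain ⟨k, hk⟩ := cong_norm2pi (r₁ + π)
    have hun : norm2pi (r₁ + π) = antip r₁ := rfl
    rw [hun] at hk
    exact norm2pi_eq_of_cong ⟨k + 1, by push_cast; linarith⟩ hr₁I.1 hr₁I.2
  have hC01 : confC0 s r₁ = s.erase r₂ := by rw [confC0, hanti]
  have hC11 : confC1 s r₁ = s := by rw [confC1, hanti]; exact Finset.insert_eq_self.mpr hr₂s
  have hC02 : confC0 s r₂ = s.erase r₁ := by rw [confC0, hanti2]
  have hC12 : confC1 s r₂ = s := by rw [confC1, hanti2]; exact Finset.insert_eq_self.mpr hr₁s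
  rw [hC01, hC11] at hxor₁
  rw [hC02, hC12] at hxor₂
  have hOCe₂ : OnCircle (s.erase r₂) := fun z hz => hcirc z (Finset.mem_of_mem_erase hz)
  have hOCe₁ : OnCircle (s.erase r₁) := fun z hz => hcirc z (Finset.mem_of_mem_erase hz)
  have hr₁e : r₁ ∈ s.erase r₂ := Finset.mem_erase.mpr ⟨hne, hr₁s⟩
  have hr₂e : r₂ ∈ s.erase r₁ := Finset.mem_erase.mpr ⟨hne.symm, hr₂s⟩
  rw [isTrueLeader_iff hOCe₂ hr₁e, isTrueLeader_iff hcirc hr₁s] at hxor₁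
  rw [isTrueLeader_iff hOCe₁ hr₂e, isTrueLeader_iff hcirc hr₂s] at hxor₂
  have hstay₁ : LeadsF s r₁ → LeadsF (s.erase r₂) r₁ := by
    intro hB
    have h := stay_leader hcirc hr₁s (by rw [hanti]; exact hr₂s) hB
    rwa [hanti] at h
  have hstay₂ : LeadsF s r₂ → LeadsF (s.erase r₁) r₂ := by
    intro hB
    have h := stay_leader hcirc hr₂s (by rw [hanti2]; exact hr₁s) hB
    rwa [hanti2] at h
  obtain ⟨hA₁, hnB₁⟩ : LeadsF (s.erase r₂) r₁ ∧ ¬ LeadsF s r₁ := by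
    rcases hxor₁ with ⟨hA, hnB⟩ | ⟨hB, hnA⟩
    · exact ⟨hA, hnB⟩
    · exact absurd (hstay₁ hB) hnA
  obtain ⟨hA₂, hnB₂⟩ : LeadsF (s.erase r₁) r₂ ∧ ¬ LeadsF s r₂ := by
    rcases hxor₂ with ⟨hA, hnB⟩ | ⟨hB, hnA⟩
    · exact ⟨hA, hnB⟩
    · exact absurd (hstay₂ hB) hnA
  obtain ⟨L, hLs, hLlead⟩ := exists_leader hcirc hasym ⟨r₁, hr₁s⟩
  have hLr₁ : L ≠ r₁ := by rintro rfl; exact hnB₁ hLlead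
  have hLr₂ : L ≠ r₂ := by rintro rfl; exact hnB₂ hLlead
  have hLI := hcirc L hLs
  set t := cwAngle r₁ L with htdef
  have ht0 : 0 < t := cwAngle_pos hr₁I.1 hr₁I.2 hLI.1 hLI.2 hLr₁
  have ht2 : t < 2*π := cwAngle_lt r₁ L
  have htne : t ≠ π := by
    intro h
    apply hLr₂
    have hxx : norm2pi (r₁ + t) = L := norm2pi_add_cwAngle hLI.1 hLI.2
    rw [h] at hxx
    rw [← hxx, ← hanti]
    rfl
  rcases lt_or_gt_of_ne htne with htlt | htgt
  · -- t < π : work with r₂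
    have htr₂ : π < cwAngle r₂ L := by
      have : cwAngle r₂ L = t + π := by
        obtain ⟨k1, h1⟩ := cwAngle_cong r₁ L
        obtain ⟨k2, h2⟩ := cong_norm2pi (r₁ + π)
        have hr₂eq : r₂ = norm2pi (r₁ + π) := hanti.symm
        exact norm2pi_eq_of_cong
          ⟨-k1 - k2 - 1, by rw [hr₂eq]; push_cast; linarith⟩ (by linarith) (by linarith)
      rw [this]; linarith
    exact kill hcirc hr₂s (by rw [hanti2]; exact hr₁s) hLs hLr₂
      (by rw [hanti2]; exact hLr₁) (by rw [hanti2]; exact hA₂)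
      (hLlead r₂ hr₂s (Ne.symm hLr₂)) htr₂
  · -- t > π : work with r₁
    exact kill hcirc hr₁s (by rw [hanti]; exact hr₂s) hLs hLr₁
      (by rw [hanti]; exact hLr₂) (by rw [hanti]; exact hA₁)
      (hLlead r₁ hr₁s (Ne.symm hLr₁)) htgt
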